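/- If (X, d) is a complete metric space with basepoint x_0 and Φ is a regular symmetric norm, then S_Φ(X, x_0) is a complete metric space. -/

import Mathlib

open Filter

/-- A symmetric norm: a norm on the space `c_00` of finitely supported real
sequences (modelled as `ℕ →₀ ℝ`), normalised by `Φ(1,0,0,…) = 1`, and invariant
under permutations of the entries and under replacing entries by their absolute
values. -/
structure SymmetricNorm where
  toFun : (ℕ →₀ ℝ) → ℝ
  nonneg : ∀ ξ, 0 ≤ toFun ξ
  eq_zero : ∀ ξ, toFun ξ = 0 → ξ = 0
  add_le : ∀ ξ η, toFun (ξ + η) ≤ toFun ξ + toFun η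
  smul_eq : ∀ (c : ℝ) (ξ), toFun (c • ξ) = |c| * toFun ξ
  norm_single : toFun (Finsupp.single 0 1) = 1
  perm_invariant : ∀ (π : Equiv.Perm ℕ) (ξ), toFun (Finsupp.equivMapDomain π ξ) = toFun ξ
  abs_invariant : ∀ (ξ : ℕ →₀ ℝ), toFun (Finsupp.mapRange (fun a => |a|) abs_zero ξ) = toFun ξ

/-- The truncation `(ξ_0, …, ξ_{n-1}, 0, 0, …)` of a sequence, as an element of `c_00`. -/
noncomputable def truncF (ξ : ℕ → ℝ) (n : ℕ) : ℕ →₀ ℝ :=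
  ∑ i ∈ Finset.range n, Finsupp.single i (ξ i)

/-- The extension of a symmetric norm to sequences: `Φ(ξ) = lim_n Φ(ξ_0,…,ξ_{n-1},0,0,…)`. -/
noncomputable def SymmetricNorm.ext (Φ : SymmetricNorm) (ξ : ℕ → ℝ) : ℝ :=
  limUnder atTop fun n => Φ.toFun (truncF ξ n)

/-- Membership in the natural domain `ℓ_Φ`: the sequence tends to `0` and the
`Φ`-norms of its truncations converge. -/
def MemLPhi (Φ : SymmetricNorm) (ξ : ℕ → ℝ) : Prop :=
  Tendsto ξ atTop (nhds 0) ∧ ∃ L, Tendsto (fun n => Φ.toFun (truncF ξ n)) atTop (nhds L)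

/-- Membership in `ℓ_Φ^+`: nonnegative `Φ`-summable sequences. -/
def MemLPhiPlus (Φ : SymmetricNorm) (ξ : ℕ → ℝ) : Prop :=
  (∀ i, 0 ≤ ξ i) ∧ MemLPhi Φ ξ

/-- A symmetric norm is regular if `Φ(ξ_{n+1}, ξ_{n+2}, …) → 0` for every `ξ ∈ ℓ_Φ`. -/
def SymmetricNorm.Regular (Φ : SymmetricNorm) : Prop :=
  ∀ ξ : ℕ → ℝ, MemLPhi Φ ξ →
    Tendsto (fun n => Φ.ext fun i => ξ (n + i)) atTop (nhds 0)

/-- `partialMax ξ k` is the supremum of sums of `k` distinct entries of `ξ`;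
for nonnegative `ξ ∈ c_0` this equals `ξ^↓_1 + ⋯ + ξ^↓_k`. -/
noncomputable def partialMax (ξ : ℕ → ℝ) (k : ℕ) : ℝ :=
  sSup ((fun s : Finset ℕ => ∑ i ∈ s, ξ i) '' {s | s.card = k})

/-- The nonincreasing rearrangement `ξ^↓` of a (nonnegative, null) sequence,
defined via `ξ^↓_1 = max ξ_i`, `ξ^↓_1 + ξ^↓_2 = max_{i ≠ j} (ξ_i + ξ_j)`, …. -/
noncomputable def decRearr (ξ : ℕ → ℝ) (k : ℕ) : ℝ :=
  partialMax ξ (k + 1) - partialMax ξ k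
open scoped Classical

variable {X : Type*} [MetricSpace X]

/-- `s : ℕ → X` is an enumeration of the countable multiset `S` in `(X, x₀)`:
every point other than the basepoint occurs in `s` exactly according to its
multiplicity in `S`. -/
def IsEnum (x0 : X) (S : X → ℕ∞) (s : ℕ → X) : Prop :=
  ∀ x, x ≠ x0 → S x = {i : ℕ | s i = x}.encard

/-- A countable multiset in `(X, x₀)`: a multiplicity function in which the
basepoint is the only point of infinite multiplicity and whose support is
countable. -/
def IsCMultiset (x0 : X) (S : X → ℕ∞) : Prop :=
  S x0 = ⊤ ∧ (∀ x, x ≠ x0 → S x ≠ ⊤) ∧ {x | S x ≠ 0}.Countable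

/-- Membership in `S_Φ(X, x₀)`: a countable multiset whose points `s_i` satisfy
`(d(x₀, s_i))_i ∈ ℓ_Φ`. -/
def MemSPhi (Φ : SymmetricNorm) (x0 : X) (S : X → ℕ∞) : Prop :=
  IsCMultiset x0 S ∧ ∃ s : ℕ → X, IsEnum x0 S s ∧ MemLPhi Φ fun i => dist x0 (s i)

/-- The distance `d_Φ(S, T)`: the infimum over pairs of enumerations `(s_i), (t_i)`
of `S, T` of `Φ(d(s_1,t_1), d(s_2,t_2), …)`. -/
noncomputable def dPhi (Φ : SymmetricNorm) (x0 : X) (S T : X → ℕ∞) : ℝ :=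
  sInf {r | ∃ s t : ℕ → X, IsEnum x0 S s ∧ IsEnum x0 T t ∧
    MemLPhi Φ (fun i => dist (s i) (t i)) ∧ r = Φ.ext fun i => dist (s i) (t i)}

/-- The sum of two multisets (addition of multiplicities away from the basepoint). -/
noncomputable def msum (x0 : X) (S T : X → ℕ∞) : X → ℕ∞ := fun x => if x = x0 then ⊤ else S x + T x

/-- The difference of two multisets (subtraction of multiplicities away from the
basepoint). -/
noncomputable def mdiff (x0 : X) (S T : X → ℕ∞) : X → ℕ∞ := fun x => if x = x0 then ⊤ else S x - T x

/-- The intersection of a multiset with a subset `V ⊆ X`. -/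
noncomputable def minter (x0 : X) (S : X → ℕ∞) (V : Set X) : X → ℕ∞ :=
  fun x => if x = x0 then ⊤ else if x ∈ V then S x else 0

/-- The multiset `S` has rank `n`: its total multiplicity away from the basepoint
is `n`, i.e. its non-basepoint part can be listed by a tuple of length `n`. -/
def HasRank (x0 : X) (S : X → ℕ∞) (n : ℕ) : Prop :=
  ∃ f : Fin n → X, (∀ i, f i ≠ x0) ∧ ∀ x, x ≠ x0 → S x = {i : Fin n | f i = x}.encard
section Basics
variable (Φ : SymmetricNorm)

lemma Phi_zero : Φ.toFun 0 = 0 := by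
  have h := Φ.smul_eq 0 0
  simpa using h

lemma truncF_apply (ξ : ℕ → ℝ) (n : ℕ) (j : ℕ) :
    truncF ξ n j = if j < n then ξ j else 0 := by
  classical
  simp only [truncF, Finsupp.finset_sum_apply, Finsupp.single_apply]
  rw [Finset.sum_ite_eq' (Finset.range n) j ξ]
  simp

lemma truncF_add (ξ η : ℕ → ℝ) (n : ℕ) :
    truncF (fun i => ξ i + η i) n = truncF ξ n + truncF η n := by
  classical
  ext j
  simp [truncF_apply, Finsupp.add_apply]
  split <;> simp

-- one-coordinate monotonicity
lemma Phi_mono_single (μ : ℕ →₀ ℝ) (j : ℕ) (hμj : μ j = 0) (hμ : ∀ i, 0 ≤ μ i)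
    (a b : ℝ) (ha : 0 ≤ a) (hab : a ≤ b) :
    Φ.toFun (μ + Finsupp.single j a) ≤ Φ.toFun (μ + Finsupp.single j b) := by
  classical
  rcases eq_or_lt_of_le (ha.trans hab) with hb | hb
  · have : a = 0 := le_antisymm (hab.trans hb.symm.le) ha
    rw [this, ← hb]
  · set η := μ + Finsupp.single j b with hη
    set η' := μ + Finsupp.single j (-b) with hη'
    have habs : Finsupp.mapRange (fun a => |a|) abs_zero η' = η := by
      ext i
      simp only [Finsupp.mapRange_apply, hη', hη, Finsupp.add_apply, Finsupp.single_apply]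
      by_cases hij : j = i
      · subst hij; simp [hμj, abs_of_nonneg (le_of_lt hb)]
      · simp [hij, abs_of_nonneg (hμ i)]
    have hη'norm : Φ.toFun η' = Φ.toFun η := by rw [← habs, Φ.abs_invariant]
    set lam := (b + a) / (2 * b) with hlam
    have hlam0 : 0 ≤ lam := by positivity
    have hlam1 : lam ≤ 1 := by
      rw [hlam, div_le_one (by linarith)]; linarith
    have hcomb : μ + Finsupp.single j a = lam • η + (1 - lam) • η' := by
      ext i
      simp only [Finsupp.add_apply, Finsupp.coe_add, Finsupp.coe_smul, Pi.add_apply,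
        Pi.smul_apply, smul_eq_mul, hη, hη', Finsupp.single_apply]
      by_cases hij : j = i
      · subst hij
        have hbne : b ≠ 0 := ne_of_gt hb
        simp only [if_pos rfl, hμj, hlam]
        field_simp
        simp only [↓reduceIte]; ring
      · simp only [if_neg hij]
        ring
    calc Φ.toFun (μ + Finsupp.single j a)
        ≤ Φ.toFun (lam • η) + Φ.toFun ((1 - lam) • η') := by rw [hcomb]; exact Φ.add_le _ _
      _ = lam * Φ.toFun η + (1 - lam) * Φ.toFun η' := by
          rw [Φ.smul_eq, Φ.smul_eq, abs_of_nonneg hlam0, abs_of_nonneg (by linarith)]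
      _ = Φ.toFun η := by rw [hη'norm]; ring

end Basics
section Mono
variable (Φ : SymmetricNorm)

lemma Phi_mono_aux (F : Finset ℕ) : ∀ ξ η : ℕ →₀ ℝ, (∀ i, 0 ≤ ξ i) → (∀ i, ξ i ≤ η i) →
    (∀ i ∉ F, ξ i = η i) → Φ.toFun ξ ≤ Φ.toFun η := by
  classical
  induction F using Finset.induction_on with
  | empty =>
    intro ξ η _ _ hout
    have : ξ = η := Finsupp.ext fun i => hout i (Finset.notMem_empty i)
    rw [this]
  | @insert j F hj ih =>
    intro ξ η hpos hle hout
    set ξ' := ξ.erase j + Finsupp.single j (η j) with hξ'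
    have hξ'app : ∀ i, ξ' i = if i = j then η j else ξ i := by
      intro i
      simp only [hξ', Finsupp.add_apply, Finsupp.erase_apply, Finsupp.single_apply]
      by_cases h : i = j
      · simp [h]
      · simp [h, Ne.symm h]
    have h1 : Φ.toFun ξ ≤ Φ.toFun ξ' := by
      have hξeq : ξ = ξ.erase j + Finsupp.single j (ξ j) := by
        rw [Finsupp.erase_add_single]
      have := Phi_mono_single Φ (ξ.erase j) j (by simp) (fun i => by
        simp only [Finsupp.erase_apply]
        split
        · exact le_refl 0
        · exact hpos i) (ξ j) (η j) (hpos j) (hle j)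
      rw [← hξeq] at this
      rw [hξ']
      exact this
    have h2 : Φ.toFun ξ' ≤ Φ.toFun η := by
      apply ih
      · intro i; rw [hξ'app]; split
        · exact le_trans (hpos j) (hle j)
        · exact hpos i
      · intro i; rw [hξ'app]; split
        · next h => subst h; exact le_refl _
        · exact hle i
      · intro i hiF
        rw [hξ'app]
        split
        · next h => rw [h]
        · next h => exact hout i (by simp [h, hiF])
    exact le_trans h1 h2

lemma Phi_mono {ξ η : ℕ →₀ ℝ} (hpos : ∀ i, 0 ≤ ξ i) (hle : ∀ i, ξ i ≤ η i) :
    Φ.toFun ξ ≤ Φ.toFun η := by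
  apply Phi_mono_aux Φ (ξ.support ∪ η.support) ξ η hpos hle
  intro i hi
  simp only [Finset.mem_union, Finsupp.mem_support_iff, not_or, not_not] at hi
  rw [hi.1, hi.2]

lemma Phi_single (j : ℕ) (a : ℝ) : Φ.toFun (Finsupp.single j a) = |a| := by
  have h1 : Finsupp.equivMapDomain (Equiv.swap 0 j) (Finsupp.single 0 a) = Finsupp.single j a := by
    rw [Finsupp.equivMapDomain_single, Equiv.swap_apply_left]
  have h2 : Finsupp.single 0 a = a • Finsupp.single 0 (1:ℝ) := by
    rw [Finsupp.smul_single, smul_eq_mul, mul_one]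
  calc Φ.toFun (Finsupp.single j a) = Φ.toFun (Finsupp.single 0 a) := by
        rw [← h1, Φ.perm_invariant]
    _ = |a| := by rw [h2, Φ.smul_eq, Φ.norm_single, mul_one]

lemma Phi_sum_le {α : Type*} (F : Finset α) (f : α → ℕ →₀ ℝ) :
    Φ.toFun (∑ i ∈ F, f i) ≤ ∑ i ∈ F, Φ.toFun (f i) := by
  classical
  induction F using Finset.induction_on with
  | empty => simp [Phi_zero]
  | @insert j F hj ih =>
    rw [Finset.sum_insert hj, Finset.sum_insert hj]
    exact le_trans (Φ.add_le _ _) (by linarith)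

lemma Phi_trunc_le_sum (ξ : ℕ → ℝ) (n : ℕ) :
    Φ.toFun (truncF ξ n) ≤ ∑ i ∈ Finset.range n, |ξ i| := by
  refine le_trans (Phi_sum_le Φ _ _) ?_
  apply Finset.sum_le_sum
  intro i _
  rw [Phi_single]

end Mono
section Ext
variable (Φ : SymmetricNorm)

lemma truncF_nonneg {ξ : ℕ → ℝ} (hξ : ∀ i, 0 ≤ ξ i) (n i : ℕ) : 0 ≤ truncF ξ n i := by
  rw [truncF_apply]; split
  · exact hξ i
  · exact le_refl 0

lemma trunc_norm_mono {ξ : ℕ → ℝ} (hξ : ∀ i, 0 ≤ ξ i) :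
    Monotone (fun n => Φ.toFun (truncF ξ n)) := by
  intro n m hnm
  apply Phi_mono Φ (truncF_nonneg hξ n)
  intro i
  rw [truncF_apply, truncF_apply]
  by_cases h : i < n
  · rw [if_pos h, if_pos (lt_of_lt_of_le h hnm)]
  · rw [if_neg h]; split
    · exact hξ i
    · exact le_refl 0

lemma ext_eq_of_tendsto {ξ : ℕ → ℝ} {L : ℝ}
    (h : Tendsto (fun n => Φ.toFun (truncF ξ n)) atTop (nhds L)) : Φ.ext ξ = L :=
  h.limUnder_eq

/-- For a nonnegative null sequence with bounded truncation norms, everything converges. -/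
lemma memLPhi_of_bounded {ξ : ℕ → ℝ} (hξ0 : ∀ i, 0 ≤ ξ i)
    (hnull : Tendsto ξ atTop (nhds 0)) {B : ℝ}
    (hB : ∀ n, Φ.toFun (truncF ξ n) ≤ B) :
    MemLPhi Φ ξ ∧ Φ.ext ξ ≤ B ∧
      Tendsto (fun n => Φ.toFun (truncF ξ n)) atTop (nhds (Φ.ext ξ)) := by
  have hmono := trunc_norm_mono Φ hξ0
  have hbdd : BddAbove (Set.range fun n => Φ.toFun (truncF ξ n)) :=
    ⟨B, by rintro x ⟨n, rfl⟩; exact hB n⟩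
  have htend := tendsto_atTop_ciSup hmono hbdd
  have hext : Φ.ext ξ = ⨆ n, Φ.toFun (truncF ξ n) := ext_eq_of_tendsto Φ htend
  refine ⟨⟨hnull, ⟨_, htend⟩⟩, ?_, by rw [hext]; exact htend⟩
  rw [hext]
  exact ciSup_le hB

lemma tendsto_trunc_of_mem {ξ : ℕ → ℝ} (h : MemLPhi Φ ξ) :
    Tendsto (fun n => Φ.toFun (truncF ξ n)) atTop (nhds (Φ.ext ξ)) := by
  obtain ⟨-, L, hL⟩ := h
  rwa [ext_eq_of_tendsto Φ hL]

lemma trunc_le_ext {ξ : ℕ → ℝ} (hξ0 : ∀ i, 0 ≤ ξ i) (h : MemLPhi Φ ξ) (n : ℕ) :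
    Φ.toFun (truncF ξ n) ≤ Φ.ext ξ :=
  Monotone.ge_of_tendsto (trunc_norm_mono Φ hξ0) (tendsto_trunc_of_mem Φ h) n

lemma ext_nonneg {ξ : ℕ → ℝ} (h : MemLPhi Φ ξ) : 0 ≤ Φ.ext ξ :=
  ge_of_tendsto' (tendsto_trunc_of_mem Φ h) (fun n => Φ.nonneg _)

lemma entry_le_ext {ξ : ℕ → ℝ} (hξ0 : ∀ i, 0 ≤ ξ i) (h : MemLPhi Φ ξ) (i : ℕ) :
    ξ i ≤ Φ.ext ξ := by
  have h1 : Φ.toFun (Finsupp.single i (ξ i)) ≤ Φ.toFun (truncF ξ (i + 1)) := by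
    apply Phi_mono Φ
    · intro j
      rw [Finsupp.single_apply]; split
      · next h => exact h ▸ hξ0 i
      · exact le_refl 0
    · intro j
      rw [Finsupp.single_apply, truncF_apply]
      by_cases hji : i = j
      · subst hji; rw [if_pos rfl, if_pos (Nat.lt_succ_self i)]
      · rw [if_neg hji]
        split
        · exact hξ0 j
        · exact le_refl 0
  have h2 := Phi_single Φ i (ξ i)
  rw [abs_of_nonneg (hξ0 i)] at h2
  calc ξ i = Φ.toFun (Finsupp.single i (ξ i)) := h2.symm
    _ ≤ Φ.toFun (truncF ξ (i + 1)) := h1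
    _ ≤ Φ.ext ξ := trunc_le_ext Φ hξ0 h _

lemma ext_le_of_trunc_le {ξ : ℕ → ℝ} {B : ℝ} (h : MemLPhi Φ ξ)
    (hB : ∀ n, Φ.toFun (truncF ξ n) ≤ B) : Φ.ext ξ ≤ B :=
  le_of_tendsto' (tendsto_trunc_of_mem Φ h) hB

end Ext
section Perm
variable (Φ : SymmetricNorm)

lemma exists_perm_extend (F : Finset ℕ) (g : ℕ → ℕ) (hg : Set.InjOn g ↑F) :
    ∃ π : Equiv.Perm ℕ, ∀ i ∈ F, π i = g i := by
  classical
  set G := F.image g with hG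
  have hcard : ∀ x : (↑F : Set ℕ), g ↑x ∈ (↑G : Set ℕ) := by
    rintro ⟨x, hx⟩
    simp only [hG, Finset.coe_image, Set.mem_image, Finset.mem_coe]
    exact ⟨x, hx, rfl⟩
  set f' : (↑F : Set ℕ) → (↑G : Set ℕ) := fun x => ⟨g ↑x, hcard x⟩ with hf'
  have hbij : Function.Bijective f' := by
    constructor
    · rintro ⟨x, hx⟩ ⟨y, hy⟩ hxy
      have : g x = g y := congrArg Subtype.val hxy
      exact Subtype.ext (hg hx hy this)
    · rintro ⟨y, hy⟩
      simp only [hG, Finset.coe_image, Set.mem_image, Finset.mem_coe] at hy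
      obtain ⟨x, hx, hgx⟩ := hy
      exact ⟨⟨x, hx⟩, Subtype.ext hgx⟩
  set e₁ : (↑F : Set ℕ) ≃ (↑G : Set ℕ) := Equiv.ofBijective f' hbij with he₁
  haveI hFc : Infinite ((↑F : Set ℕ)ᶜ : Set ℕ) :=
    (Set.Finite.infinite_compl (F.finite_toSet)).to_subtype
  haveI hGc : Infinite ((↑G : Set ℕ)ᶜ : Set ℕ) :=
    (Set.Finite.infinite_compl (G.finite_toSet)).to_subtype
  obtain ⟨dF⟩ := nonempty_denumerable (((↑F : Set ℕ)ᶜ : Set ℕ))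
  obtain ⟨dG⟩ := nonempty_denumerable (((↑G : Set ℕ)ᶜ : Set ℕ))
  set e₂ : (((↑F : Set ℕ)ᶜ : Set ℕ)) ≃ (((↑G : Set ℕ)ᶜ : Set ℕ)) :=
    (@Denumerable.eqv _ dF).trans (@Denumerable.eqv _ dG).symm with he₂
  letI : DecidablePred (· ∈ (↑F : Set ℕ)) := fun a => Classical.propDecidable _
  letI : DecidablePred (· ∈ (↑G : Set ℕ)) := fun a => Classical.propDecidable _
  refine ⟨(Equiv.Set.sumCompl (↑F : Set ℕ)).symm.trans
    ((e₁.sumCongr e₂).trans (Equiv.Set.sumCompl (↑G : Set ℕ))), ?_⟩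
  intro i hi
  have h1 : (Equiv.Set.sumCompl (↑F : Set ℕ)).symm i = Sum.inl ⟨i, hi⟩ :=
    Equiv.Set.sumCompl_symm_apply_of_mem hi
  simp only [Equiv.trans_apply, h1, Equiv.sumCongr_apply, Sum.map_inl,
    Equiv.Set.sumCompl_apply_inl]
  rfl

lemma sum_single_apply (ξ : ℕ → ℝ) (F : Finset ℕ) (j : ℕ) :
    (∑ i ∈ F, Finsupp.single i (ξ i)) j = if j ∈ F then ξ j else 0 := by
  classical
  simp only [Finsupp.finset_sum_apply, Finsupp.single_apply]
  rw [Finset.sum_ite_eq' F j ξ]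

lemma Phi_reindex (F : Finset ℕ) (g : ℕ → ℕ) (hg : Set.InjOn g ↑F) (ζ : ℕ → ℝ) :
    Φ.toFun (∑ i ∈ F, Finsupp.single (g i) (ζ i)) =
      Φ.toFun (∑ i ∈ F, Finsupp.single i (ζ i)) := by
  classical
  obtain ⟨π, hπ⟩ := exists_perm_extend F g hg
  have h1 : Finsupp.equivMapDomain π (∑ i ∈ F, Finsupp.single i (ζ i)) =
      ∑ i ∈ F, Finsupp.single (g i) (ζ i) := by
    have := map_sum (Finsupp.domCongr (M := ℝ) π) (fun i => Finsupp.single i (ζ i)) F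
    simp only [Finsupp.domCongr_apply] at this
    rw [this]
    apply Finset.sum_congr rfl
    intro i hi
    rw [Finsupp.equivMapDomain_single, hπ i hi]
  rw [← h1, Φ.perm_invariant]

end Perm
section PermExt
variable (Φ : SymmetricNorm)

lemma restr_le_ext {ξ : ℕ → ℝ} (hξ0 : ∀ i, 0 ≤ ξ i) (h : MemLPhi Φ ξ) (F : Finset ℕ) :
    Φ.toFun (∑ i ∈ F, Finsupp.single i (ξ i)) ≤ Φ.ext ξ := by
  classical
  obtain ⟨m, hm⟩ : ∃ m, ∀ i ∈ F, i < m := by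
    rcases F.eq_empty_or_nonempty with rfl | hne
    · exact ⟨0, by simp⟩
    · exact ⟨F.max' hne + 1, fun i hi => Nat.lt_succ_of_le (F.le_max' i hi)⟩
  have h1 : Φ.toFun (∑ i ∈ F, Finsupp.single i (ξ i)) ≤ Φ.toFun (truncF ξ m) := by
    apply Phi_mono Φ
    · intro i; rw [sum_single_apply]; split
      · exact hξ0 i
      · exact le_refl 0
    · intro i
      rw [sum_single_apply, truncF_apply]
      by_cases hi : i ∈ F
      · rw [if_pos hi, if_pos (hm i hi)]
      · rw [if_neg hi]; split
        · exact hξ0 i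
        · exact le_refl 0
  exact h1.trans (trunc_le_ext Φ hξ0 h m)

lemma trunc_comp_perm_eq (σ : Equiv.Perm ℕ) (ξ : ℕ → ℝ) (n : ℕ) :
    Φ.toFun (truncF (fun i => ξ (σ i)) n) =
      Φ.toFun (∑ j ∈ (Finset.range n).image σ, Finsupp.single j (ξ j)) := by
  classical
  rw [truncF]
  rw [← Phi_reindex Φ (Finset.range n) σ (σ.injective.injOn) (fun i => ξ (σ i))]
  congr 1
  rw [Finset.sum_image (fun a _ b _ h => σ.injective h)]

lemma tendsto_perm_atTop (σ : Equiv.Perm ℕ) : Tendsto (⇑σ) atTop atTop := by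
  rw [← Nat.cofinite_eq_atTop]
  exact σ.injective.tendsto_cofinite

lemma memLPhi_comp_perm {ξ : ℕ → ℝ} (hξ0 : ∀ i, 0 ≤ ξ i) (h : MemLPhi Φ ξ)
    (σ : Equiv.Perm ℕ) :
    MemLPhi Φ (fun i => ξ (σ i)) ∧ Φ.ext (fun i => ξ (σ i)) ≤ Φ.ext ξ := by
  have hnull : Tendsto (fun i => ξ (σ i)) atTop (nhds 0) :=
    h.1.comp (tendsto_perm_atTop σ)
  have hbd : ∀ n, Φ.toFun (truncF (fun i => ξ (σ i)) n) ≤ Φ.ext ξ := by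
    intro n
    rw [trunc_comp_perm_eq]
    exact restr_le_ext Φ hξ0 h _
  obtain ⟨h1, h2, -⟩ := memLPhi_of_bounded Φ (fun i => hξ0 (σ i)) hnull hbd
  exact ⟨h1, h2⟩

lemma memLPhi_comp_perm_ext {ξ : ℕ → ℝ} (hξ0 : ∀ i, 0 ≤ ξ i) (h : MemLPhi Φ ξ)
    (σ : Equiv.Perm ℕ) :
    MemLPhi Φ (fun i => ξ (σ i)) ∧ Φ.ext (fun i => ξ (σ i)) = Φ.ext ξ := by
  obtain ⟨h1, h2⟩ := memLPhi_comp_perm Φ hξ0 h σ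
  refine ⟨h1, le_antisymm h2 ?_⟩
  have := (memLPhi_comp_perm Φ (fun i => hξ0 (σ i)) h1 σ.symm).2
  have heq : (fun i => ξ (σ (σ.symm i))) = ξ := by
    funext i; rw [Equiv.apply_symm_apply]
  rwa [heq] at this

/-- zero-padding of a sequence at odd positions -/
noncomputable def pad0 (ξ : ℕ → ℝ) : ℕ → ℝ := fun i => if i % 2 = 0 then ξ (i / 2) else 0

lemma pad0_trunc_eq (ξ : ℕ → ℝ) (n : ℕ) :
    truncF (pad0 ξ) n = ∑ j ∈ Finset.range ((n + 1) / 2), Finsupp.single (2 * j) (ξ j) := by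
  classical
  ext i
  rw [truncF_apply]
  have hr : (∑ j ∈ Finset.range ((n + 1) / 2), Finsupp.single (2 * j) (ξ j)) i
      = if i % 2 = 0 ∧ i / 2 < (n + 1) / 2 then ξ (i / 2) else 0 := by
    rw [Finsupp.finset_sum_apply]
    by_cases he : i % 2 = 0
    · have h2 : 2 * (i / 2) = i := by omega
      by_cases hlt : i / 2 < (n + 1) / 2
      · rw [if_pos ⟨he, hlt⟩]
        rw [Finset.sum_eq_single (i / 2)]
        · rw [Finsupp.single_apply, if_pos h2]
        · intro j hj hne
          rw [Finsupp.single_apply, if_neg (by omega)]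
        · intro hmem
          exact absurd (Finset.mem_range.mpr hlt) hmem
      · rw [if_neg (by tauto)]
        apply Finset.sum_eq_zero
        intro j hj
        rw [Finsupp.single_apply, if_neg (by rw [Finset.mem_range] at hj; omega)]
    · rw [if_neg (by tauto)]
      apply Finset.sum_eq_zero
      intro j hj
      rw [Finsupp.single_apply, if_neg (by omega)]
  rw [hr, pad0]
  by_cases he : i % 2 = 0
  · by_cases hlt : i < n
    · rw [if_pos hlt, if_pos he, if_pos ⟨he, by omega⟩]
    · rw [if_neg hlt, if_neg (by push_neg; intro _; omega)]
  · simp [he]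

lemma pad0_trunc_norm (ξ : ℕ → ℝ) (n : ℕ) :
    Φ.toFun (truncF (pad0 ξ) n) = Φ.toFun (truncF ξ ((n + 1) / 2)) := by
  rw [pad0_trunc_eq]
  have hinj : Set.InjOn (fun j => 2 * j) ↑(Finset.range ((n + 1) / 2)) := by
    intro a _ b _ h; dsimp at h; omega
  exact Phi_reindex Φ _ _ hinj ξ

lemma memLPhi_pad0 {ξ : ℕ → ℝ} (hξ0 : ∀ i, 0 ≤ ξ i) (h : MemLPhi Φ ξ) :
    MemLPhi Φ (pad0 ξ) ∧ Φ.ext (pad0 ξ) = Φ.ext ξ := by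
  have hnull : Tendsto (pad0 ξ) atTop (nhds 0) := by
    apply squeeze_zero (fun i => by rw [pad0]; split; exact hξ0 _; exact le_refl 0)
      (g := fun i => ξ (i / 2))
    · intro i; rw [pad0]; split
      · exact le_refl _
      · exact hξ0 _
    · exact h.1.comp (Tendsto.comp tendsto_id (tendsto_atTop_atTop_of_monotone
        (fun a b hab => Nat.div_le_div_right hab) (fun b => ⟨2 * b, by omega⟩)))
  have htend : Tendsto (fun n => Φ.toFun (truncF (pad0 ξ) n)) atTop (nhds (Φ.ext ξ)) := by
    have h2 : Tendsto (fun n : ℕ => (n + 1) / 2) atTop atTop :=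
      tendsto_atTop_atTop_of_monotone (fun a b hab => by omega) (fun b => ⟨2 * b, by omega⟩)
    have := (tendsto_trunc_of_mem Φ h).comp h2
    simpa only [Function.comp_def, pad0_trunc_norm] using this
  refine ⟨⟨hnull, ⟨_, htend⟩⟩, ext_eq_of_tendsto Φ htend⟩

end PermExt
section Enum
variable {X : Type*} [MetricSpace X]

/-- padding of an enumeration with the basepoint at odd positions -/
noncomputable def padE (x0 : X) (s : ℕ → X) : ℕ → X :=
  fun i => if i % 2 = 0 then s (i / 2) else x0

lemma dist_padE (x0 : X) (s t : ℕ → X) (i : ℕ) :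
    dist (padE x0 s i) (padE x0 t i) = pad0 (fun j => dist (s j) (t j)) i := by
  rw [padE, padE, pad0]
  split
  · rfl
  · rw [dist_self]

lemma dist_padE_base (x0 : X) (s : ℕ → X) (i : ℕ) :
    dist x0 (padE x0 s i) = pad0 (fun j => dist x0 (s j)) i := by
  rw [padE, pad0]
  split
  · rfl
  · rw [dist_self]

lemma isEnum_padE {x0 : X} {S : X → ℕ∞} {s : ℕ → X} (h : IsEnum x0 S s) :
    IsEnum x0 S (padE x0 s) := by
  intro x hx
  rw [h x hx]
  have : {i : ℕ | padE x0 s i = x} = (fun j => 2 * j) '' {i : ℕ | s i = x} := by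
    ext i
    simp only [Set.mem_setOf_eq, Set.mem_image, padE]
    constructor
    · intro hi
      by_cases he : i % 2 = 0
      · rw [if_pos he] at hi
        exact ⟨i / 2, hi, by omega⟩
      · rw [if_neg he] at hi
        exact absurd hi.symm hx
    · rintro ⟨j, hj, rfl⟩
      rw [if_pos (by omega)]
      have : 2 * j / 2 = j := by omega
      rw [this]; exact hj
  rw [this, Function.Injective.encard_image (fun a b h => by omega)]

lemma padE_fiber_infinite (x0 : X) (s : ℕ → X) : {i : ℕ | padE x0 s i = x0}.Infinite := by
  apply Set.infinite_of_injective_forall_mem (f := fun k : ℕ => 2 * k + 1)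
  · intro a b h; dsimp at h; omega
  · intro k
    simp only [Set.mem_setOf_eq, padE]
    rw [if_neg (by omega)]

lemma isEnum_comp_perm {x0 : X} {S : X → ℕ∞} {s : ℕ → X} (h : IsEnum x0 S s)
    (σ : Equiv.Perm ℕ) : IsEnum x0 S (fun i => s (σ i)) := by
  intro x hx
  rw [h x hx]
  have : {i : ℕ | s (σ i) = x} = ⇑σ.symm '' {i : ℕ | s i = x} := by
    ext i
    simp only [Set.mem_setOf_eq, Set.mem_image]
    constructor
    · intro hi; exact ⟨σ i, hi, σ.symm_apply_apply i⟩
    · rintro ⟨j, hj, rfl⟩; rwa [σ.apply_symm_apply]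
  rw [this, Function.Injective.encard_image σ.symm.injective]

lemma equiv_of_encard_eq {A B : Set ℕ} (h : A.encard = B.encard) : Nonempty (↥A ≃ ↥B) := by
  classical
  by_cases hA : A.Finite
  · have hB : B.Finite := by
      rwa [← Set.finite_iff_finite_of_encard_eq_encard h]
    rw [hA.encard_eq_coe_toFinset_card, hB.encard_eq_coe_toFinset_card] at h
    have hcard : hA.toFinset.card = hB.toFinset.card := by exact_mod_cast h
    exact ⟨hA.subtypeEquivToFinset.trans ((Finset.equivOfCardEq hcard).trans
      hB.subtypeEquivToFinset.symm)⟩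
  · have hA' : A.Infinite := hA
    have hB' : B.Infinite := by
      rw [← Set.encard_eq_top_iff] at hA' ⊢
      rwa [← h]
    haveI := hA'.to_subtype
    haveI := hB'.to_subtype
    obtain ⟨dA⟩ := nonempty_denumerable ↥A
    obtain ⟨dB⟩ := nonempty_denumerable ↥B
    exact ⟨(@Denumerable.eqv _ dA).trans (@Denumerable.eqv _ dB).symm⟩

end Enum
section Match
variable {X : Type*} [MetricSpace X]

/-- Two enumerations of the same multiset, each using the basepoint infinitely often,
differ by a permutation of the indices. -/
lemma exists_perm_of_isEnum {x0 : X} {S : X → ℕ∞} {s t : ℕ → X}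
    (hs : IsEnum x0 S s) (ht : IsEnum x0 S t)
    (hsi : {i : ℕ | s i = x0}.Infinite) (hti : {i : ℕ | t i = x0}.Infinite) :
    ∃ σ : Equiv.Perm ℕ, ∀ i, s (σ i) = t i := by
  classical
  have hcard : ∀ x : X, {i : ℕ | t i = x}.encard = {i : ℕ | s i = x}.encard := by
    intro x
    by_cases hx : x = x0
    · subst hx
      rw [Set.encard_eq_top_iff.mpr hti, Set.encard_eq_top_iff.mpr hsi]
    · rw [← ht x hx, ← hs x hx]
  have he : ∀ x : X, Nonempty (↥{i : ℕ | t i = x} ≃ ↥{i : ℕ | s i = x}) :=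
    fun x => equiv_of_encard_eq (hcard x)
  have e : ∀ x : X, ↥{i : ℕ | t i = x} ≃ ↥{i : ℕ | s i = x} := fun x => (he x).some
  set σ : ℕ → ℕ := fun i => ↑(e (t i) ⟨i, rfl⟩) with hσ
  have hkey : ∀ (x : X) (i : ℕ) (hi : t i = x), σ i = ↑(e x ⟨i, hi⟩) := by
    intro x i hi
    subst hi
    rfl
  have hσs : ∀ i, s (σ i) = t i := by
    intro i
    exact (e (t i) ⟨i, rfl⟩).2
  have hinj : Function.Injective σ := by
    intro i j hij
    have hx : t i = t j := by rw [← hσs i, ← hσs j, hij]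
    have h1 := hkey (t i) i rfl
    have h2 := hkey (t i) j hx.symm
    rw [h1, h2] at hij
    have := (e (t i)).injective (Subtype.ext hij)
    exact congrArg Subtype.val this
  have hsurj : Function.Surjective σ := by
    intro k
    set y := (e (s k)).symm ⟨k, rfl⟩ with hy
    refine ⟨↑y, ?_⟩
    have hty : t ↑y = s k := y.2
    rw [hkey (s k) ↑y hty]
    have : (⟨↑y, hty⟩ : ↥{i : ℕ | t i = s k}) = y := Subtype.ext rfl
    rw [this, hy, Equiv.apply_symm_apply]
  exact ⟨Equiv.ofBijective σ ⟨hinj, hsurj⟩, hσs⟩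

end Match
section DPhi
variable {X : Type*} [MetricSpace X] (Φ : SymmetricNorm)

/-- combined bound: a nonnegative null sequence dominated by the sum of two sequences with
bounded truncation norms is in `ℓ_Φ`. -/
lemma memLPhi_dominated {ζ β γ : ℕ → ℝ} {B₁ B₂ : ℝ} (hζ0 : ∀ i, 0 ≤ ζ i)
    (hζnull : Tendsto ζ atTop (nhds 0))
    (hβ0 : ∀ i, 0 ≤ β i) (hγ0 : ∀ i, 0 ≤ γ i) (hle : ∀ i, ζ i ≤ β i + γ i)
    (hβB : ∀ n, Φ.toFun (truncF β n) ≤ B₁) (hγB : ∀ n, Φ.toFun (truncF γ n) ≤ B₂) :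
    MemLPhi Φ ζ ∧ Φ.ext ζ ≤ B₁ + B₂ := by
  have hbd : ∀ n, Φ.toFun (truncF ζ n) ≤ B₁ + B₂ := by
    intro n
    have h1 : Φ.toFun (truncF ζ n) ≤ Φ.toFun (truncF (fun i => β i + γ i) n) := by
      apply Phi_mono Φ (truncF_nonneg hζ0 n)
      intro i
      rw [truncF_apply, truncF_apply]
      split
      · exact hle i
      · exact le_refl 0
    rw [truncF_add] at h1
    calc Φ.toFun (truncF ζ n) ≤ Φ.toFun (truncF β n) + Φ.toFun (truncF γ n) :=
          h1.trans (Φ.add_le _ _)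
      _ ≤ B₁ + B₂ := add_le_add (hβB n) (hγB n)
  obtain ⟨h1, h2, -⟩ := memLPhi_of_bounded Φ hζ0 hζnull hbd
  exact ⟨h1, h2⟩

/-- The set of pairing values between two `Φ`-summable multisets. -/
def pairSet (x0 : X) (A B : X → ℕ∞) : Set ℝ :=
  {r | ∃ s t : ℕ → X, IsEnum x0 A s ∧ IsEnum x0 B t ∧
    MemLPhi Φ (fun i => dist (s i) (t i)) ∧ r = Φ.ext fun i => dist (s i) (t i)}

lemma dPhi_eq_sInf_pairSet (x0 : X) (A B : X → ℕ∞) :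
    dPhi Φ x0 A B = sInf (pairSet Φ x0 A B) := rfl

lemma pairSet_nonneg (x0 : X) (A B : X → ℕ∞) : ∀ r ∈ pairSet Φ x0 A B, 0 ≤ r := by
  rintro r ⟨s, t, -, -, hml, rfl⟩
  exact ext_nonneg Φ hml

lemma dPhi_nonneg (x0 : X) (A B : X → ℕ∞) : 0 ≤ dPhi Φ x0 A B :=
  Real.sInf_nonneg (pairSet_nonneg Φ x0 A B)

lemma dPhi_le (x0 : X) (A B : X → ℕ∞) {r : ℝ} (hr : r ∈ pairSet Φ x0 A B) :
    dPhi Φ x0 A B ≤ r :=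
  csInf_le ⟨0, pairSet_nonneg Φ x0 A B⟩ hr

lemma pairSet_nonempty {x0 : X} {A B : X → ℕ∞} (hA : MemSPhi Φ x0 A) (hB : MemSPhi Φ x0 B) :
    (pairSet Φ x0 A B).Nonempty := by
  obtain ⟨-, s, hsA, hs⟩ := hA
  obtain ⟨-, t, htB, ht⟩ := hB
  have hml : MemLPhi Φ (fun i => dist (s i) (t i)) := by
    refine (memLPhi_dominated Φ (fun i => dist_nonneg) ?_ (fun i => dist_nonneg)
      (fun i => dist_nonneg) (fun i => dist_triangle_left _ _ _)
      (fun n => trunc_le_ext Φ (fun i => dist_nonneg) hs n)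
      (fun n => trunc_le_ext Φ (fun i => dist_nonneg) ht n)).1
    · have h0 := (hs.1.add ht.1)
      rw [add_zero] at h0
      exact squeeze_zero (fun i => dist_nonneg)
        (fun i => dist_triangle_left (s i) (t i) x0) h0
  exact ⟨_, s, t, hsA, htB, hml, rfl⟩

lemma exists_pairing_of_dPhi_lt {x0 : X} {A B : X → ℕ∞} (hA : MemSPhi Φ x0 A)
    (hB : MemSPhi Φ x0 B) {ε : ℝ} (h : dPhi Φ x0 A B < ε) :
    ∃ s t : ℕ → X, IsEnum x0 A s ∧ IsEnum x0 B t ∧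
      MemLPhi Φ (fun i => dist (s i) (t i)) ∧ Φ.ext (fun i => dist (s i) (t i)) < ε := by
  obtain ⟨r, hr, hrε⟩ := exists_lt_of_csInf_lt (pairSet_nonempty Φ hA hB) h
  obtain ⟨s, t, hsA, htB, hml, rfl⟩ := hr
  exact ⟨s, t, hsA, htB, hml, hrε⟩

/-- Transport: replace one side of a near-optimal pairing by any prescribed enumeration
with infinitely many basepoint slots. -/
lemma transport_pairing {x0 : X} {A B : X → ℕ∞} {s t u : ℕ → X}
    (hsA : IsEnum x0 A s) (htB : IsEnum x0 B t)
    (hml : MemLPhi Φ (fun i => dist (s i) (t i)))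
    (huA : IsEnum x0 A u) (hui : {i : ℕ | u i = x0}.Infinite) :
    ∃ w : ℕ → X, IsEnum x0 B w ∧ {i : ℕ | w i = x0}.Infinite ∧
      MemLPhi Φ (fun i => dist (u i) (w i)) ∧
      Φ.ext (fun i => dist (u i) (w i)) ≤ Φ.ext (fun i => dist (s i) (t i)) := by
  classical
  set ζ := fun i => dist (s i) (t i) with hζ
  have hζ0 : ∀ i, 0 ≤ ζ i := fun i => dist_nonneg
  obtain ⟨hpml, hpext⟩ := memLPhi_pad0 Φ hζ0 hml
  obtain ⟨σ, hσ⟩ := exists_perm_of_isEnum (isEnum_padE hsA) huA (padE_fiber_infinite x0 s) hui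
  set w := fun i => padE x0 t (σ i) with hw
  have hdist : (fun i => dist (u i) (w i)) = fun i => pad0 ζ (σ i) := by
    funext i
    rw [hw, ← hσ i, dist_padE]
  obtain ⟨hml2, hext2⟩ := memLPhi_comp_perm Φ (fun i => by rw [pad0]; split; exact hζ0 _; rfl)
    hpml σ
  refine ⟨w, isEnum_comp_perm (isEnum_padE htB) σ, ?_, ?_, ?_⟩
  · have : {i : ℕ | w i = x0} = ⇑σ ⁻¹' {i : ℕ | padE x0 t i = x0} := rfl
    rw [this]
    exact Set.Infinite.preimage (padE_fiber_infinite x0 t) (by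
      intro i _; exact ⟨σ.symm i, σ.apply_symm_apply i⟩)
  · rwa [hdist]
  · rw [hdist]
    exact hext2.trans (le_of_eq hpext)

end DPhi
section Aux
variable (Φ : SymmetricNorm)

lemma null_add {f g : ℕ → ℝ} (hf : Tendsto f atTop (nhds 0)) (hg : Tendsto g atTop (nhds 0)) :
    Tendsto (fun i => f i + g i) atTop (nhds 0) := by
  have := hf.add hg
  rwa [add_zero] at this

lemma truncF_sum {α : Type*} (F : Finset α) (f : α → ℕ → ℝ) (n : ℕ) :
    truncF (fun i => ∑ m ∈ F, f m i) n = ∑ m ∈ F, truncF (f m) n := by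
  classical
  ext j
  rw [Finsupp.finset_sum_apply, truncF_apply]
  split
  · next h =>
    exact (Finset.sum_congr rfl fun m _ => by rw [truncF_apply, if_pos h]).symm
  · next h =>
    exact (Finset.sum_eq_zero fun m _ => by rw [truncF_apply, if_neg h]).symm

lemma exists_chain {α : Type*} (Q : ℕ → α → Prop) (R : ℕ → α → α → Prop)
    (h0 : ∃ a, Q 0 a) (hstep : ∀ k a, Q k a → ∃ b, Q (k + 1) b ∧ R k a b) :
    ∃ u : ℕ → α, (∀ k, Q k (u k)) ∧ ∀ k, R k (u k) (u (k + 1)) := by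
  classical
  obtain ⟨a0, ha0⟩ := h0
  choose g hg1 hg2 using hstep
  let uu : ∀ _k : ℕ, {a : α // Q _k a} :=
    fun k => Nat.rec ⟨a0, ha0⟩ (fun k ih => ⟨g k ih.1 ih.2, hg1 k ih.1 ih.2⟩) k
  refine ⟨fun k => (uu k).1, fun k => (uu k).2, fun k => ?_⟩
  exact hg2 k (uu k).1 (uu k).2

end Aux
open Filter in
/-- If `(X, d)` is a complete metric space and `Φ` is a regular symmetric norm,
then `S_Φ(X, x₀)` is complete: every `d_Φ`-Cauchy sequence of `Φ`-summable
multisets converges to a `Φ`-summable multiset. -/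
theorem sPhi_complete [CompleteSpace X] (x0 : X) (Φ : SymmetricNorm)
    (hΦ : Φ.Regular) (S : ℕ → X → ℕ∞) (hS : ∀ n, MemSPhi Φ x0 (S n))
    (hcauchy : ∀ ε > 0, ∃ N, ∀ m ≥ N, ∀ n ≥ N, dPhi Φ x0 (S m) (S n) < ε) :
    ∃ L, MemSPhi Φ x0 L ∧
      Tendsto (fun n => dPhi Φ x0 (S n) L) atTop (nhds 0) := by
  classical
  -- monotone thresholds
  obtain ⟨M, hMmono, hM⟩ : ∃ M : ℕ → ℕ, Monotone M ∧
      ∀ k, ∀ m ≥ M k, ∀ n ≥ M k, dPhi Φ x0 (S m) (S n) < (1/2 : ℝ) ^ k := by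
    have h : ∀ k : ℕ, ∃ N, ∀ m ≥ N, ∀ n ≥ N, dPhi Φ x0 (S m) (S n) < (1/2 : ℝ) ^ k :=
      fun k => hcauchy _ (by positivity)
    choose N hN using h
    refine ⟨fun k => (Finset.range (k + 1)).sup N, ?_, ?_⟩
    · intro a b hab
      exact Finset.sup_mono (Finset.range_subset_range.mpr (by omega))
    · intro k m hm n hn
      have hk : N k ≤ (Finset.range (k + 1)).sup N :=
        Finset.le_sup (Finset.self_mem_range_succ k)
      exact hN k m (hk.trans hm) n (hk.trans hn)
  -- the chain of compatible enumerations
  obtain ⟨u, hP, hR⟩ := exists_chain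
    (Q := fun k f => IsEnum x0 (S (M k)) f ∧ {i : ℕ | f i = x0}.Infinite ∧
      MemLPhi Φ fun i => dist x0 (f i))
    (R := fun k f g => MemLPhi Φ (fun i => dist (f i) (g i)) ∧
      Φ.ext (fun i => dist (f i) (g i)) ≤ (1/2 : ℝ) ^ k)
    (by
      obtain ⟨-, s0, hs0, hml0⟩ := hS (M 0)
      refine ⟨padE x0 s0, isEnum_padE hs0, padE_fiber_infinite x0 s0, ?_⟩
      have heq : (fun i => dist x0 (padE x0 s0 i)) = pad0 fun j => dist x0 (s0 j) :=
        funext (dist_padE_base x0 s0)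
      rw [heq]
      exact (memLPhi_pad0 Φ (fun i => dist_nonneg) hml0).1)
    (by
      rintro k f ⟨hfE, hfI, hfml⟩
      have hlt := hM k (M k) le_rfl (M (k + 1)) (hMmono (Nat.le_succ k))
      obtain ⟨s, t, hsA, htB, hml, hext⟩ := exists_pairing_of_dPhi_lt Φ (hS _) (hS _) hlt
      obtain ⟨w, hwB, hwI, hwml, hwext⟩ := transport_pairing Φ hsA htB hml hfE hfI
      refine ⟨w, ⟨hwB, hwI, ?_⟩, hwml, hwext.trans hext.le⟩
      have hnull : Tendsto (fun i => dist x0 (w i)) atTop (nhds 0) := by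
        apply squeeze_zero (fun i => dist_nonneg)
          (fun i => dist_triangle x0 (f i) (w i))
        exact null_add hfml.1 hwml.1
      exact (memLPhi_dominated Φ (fun i => dist_nonneg) hnull (fun i => dist_nonneg)
        (fun i => dist_nonneg) (fun i => dist_triangle x0 (f i) (w i))
        (fun n => trunc_le_ext Φ (fun i => dist_nonneg) hfml n)
        (fun n => trunc_le_ext Φ (fun i => dist_nonneg) hwml n)).1)
  -- step distance bound
  have hdist_step : ∀ k i, dist (u k i) (u (k + 1) i) ≤ (1/2 : ℝ) ^ k := fun k i =>
    (entry_le_ext Φ (fun j => dist_nonneg) (hR k).1 i).trans (hR k).2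
  -- limits
  have hcs : ∀ i, ∃ y, Tendsto (fun k => u k i) atTop (nhds y) := by
    intro i
    apply cauchySeq_tendsto_of_complete
    exact cauchySeq_of_le_geometric (1/2) 1 (by norm_num)
      (fun m => by rw [one_mul]; exact hdist_step m i)
  choose v hv using hcs
  have hpoint : ∀ k i, dist (u k i) (v i) ≤ 2 * (1/2 : ℝ) ^ k := by
    intro k i
    have h := dist_le_of_le_geometric_of_tendsto (1/2) 1 (by norm_num : (1/2:ℝ) < 1)
      (fun m => by rw [one_mul]; exact hdist_step m i) (hv i) k
    have he : (1 : ℝ) * (1/2) ^ k / (1 - 1/2) = 2 * (1/2) ^ k := by ring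
    rwa [he] at h
  -- truncation-norm tail bound
  have htail : ∀ k n, Φ.toFun (truncF (fun i => dist (u k i) (v i)) n) ≤ 2 * (1/2 : ℝ) ^ k := by
    intro k n
    have hbound : ∀ K : ℕ, Φ.toFun (truncF (fun i => dist (u k i) (v i)) n)
        ≤ 2 * (1/2 : ℝ) ^ k + ∑ i ∈ Finset.range n, dist (u (k + K) i) (v i) := by
      intro K
      have hpt : ∀ i, dist (u k i) (v i) ≤
          (∑ m ∈ Finset.range K, dist (u (k + m) i) (u (k + m + 1) i))
            + dist (u (k + K) i) (v i) := by
        intro i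
        have h2 := dist_le_range_sum_dist (fun m => u (k + m) i) K
        calc dist (u k i) (v i)
            ≤ dist (u k i) (u (k + K) i) + dist (u (k + K) i) (v i) := dist_triangle _ _ _
          _ ≤ _ := by
              apply add_le_add_left
              simpa [add_assoc] using h2
      have h1 : Φ.toFun (truncF (fun i => dist (u k i) (v i)) n) ≤
          Φ.toFun (truncF (fun i =>
            (∑ m ∈ Finset.range K, dist (u (k + m) i) (u (k + m + 1) i))
              + dist (u (k + K) i) (v i)) n) := by
        apply Phi_mono Φ (truncF_nonneg (fun i => dist_nonneg) n)
        intro i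
        rw [truncF_apply, truncF_apply]
        split
        · exact hpt i
        · exact le_refl 0
      rw [truncF_add, truncF_sum] at h1
      have h3 : Φ.toFun ((∑ m ∈ Finset.range K,
            truncF (fun i => dist (u (k + m) i) (u (k + m + 1) i)) n)
            + truncF (fun i => dist (u (k + K) i) (v i)) n)
          ≤ (∑ m ∈ Finset.range K, (1/2 : ℝ) ^ (k + m))
            + ∑ i ∈ Finset.range n, dist (u (k + K) i) (v i) := by
        refine (Φ.add_le _ _).trans (add_le_add ?_ ?_)
        · refine (Phi_sum_le Φ _ _).trans (Finset.sum_le_sum fun m _ => ?_)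
          exact (trunc_le_ext Φ (fun j => dist_nonneg) (hR (k + m)).1 n).trans (hR (k + m)).2
        · refine (Phi_trunc_le_sum Φ _ n).trans (le_of_eq ?_)
          exact Finset.sum_congr rfl fun i _ => abs_of_nonneg dist_nonneg
      have h4 : (∑ m ∈ Finset.range K, (1/2 : ℝ) ^ (k + m)) ≤ 2 * (1/2 : ℝ) ^ k := by
        have : (∑ m ∈ Finset.range K, (1/2 : ℝ) ^ (k + m))
            = (1/2 : ℝ) ^ k * ∑ m ∈ Finset.range K, (1/2 : ℝ) ^ m := by
          rw [Finset.mul_sum]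
          exact Finset.sum_congr rfl fun m _ => by rw [pow_add]
        rw [this, mul_comm]
        have h5 := sum_geometric_two_le K
        have h6 : (0:ℝ) < (1/2:ℝ)^k := by positivity
        nlinarith
      linarith [h1.trans h3]
    have hT : Tendsto (fun K => 2 * (1/2 : ℝ) ^ k
        + ∑ i ∈ Finset.range n, dist (u (k + K) i) (v i)) atTop (nhds (2 * (1/2 : ℝ) ^ k + 0)) := by
      apply Tendsto.const_add
      have hsum : Tendsto (fun K => ∑ i ∈ Finset.range n, dist (u (k + K) i) (v i)) atTop
          (nhds (∑ _i ∈ Finset.range n, (0:ℝ))) := by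
        apply tendsto_finset_sum
        intro i _
        have hki : Tendsto (fun K => u (k + K) i) atTop (nhds (v i)) := by
          apply (hv i).comp
          exact tendsto_atTop_atTop_of_monotone (fun a b hab => by omega) (fun b => ⟨b, by omega⟩)
        have hdd : Tendsto (fun K => dist (u (k + K) i) (v i)) atTop
            (nhds (dist (v i) (v i))) := hki.dist tendsto_const_nhds
        rwa [dist_self] at hdd
      simpa using hsum
    have := ge_of_tendsto hT (Eventually.of_forall hbound)
    rwa [add_zero] at this
  -- v's distances to the basepoint form a null sequence
  have hvnull : Tendsto (fun i => dist x0 (v i)) atTop (nhds 0) := by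
    rw [Metric.tendsto_atTop]
    intro ε hε
    obtain ⟨k, hk⟩ := exists_pow_lt_of_lt_one (show (0:ℝ) < ε/4 by linarith)
      (by norm_num : (1/2 : ℝ) < 1)
    have hnk := (hP k).2.2.1
    rw [Metric.tendsto_atTop] at hnk
    obtain ⟨N, hN⟩ := hnk (ε/2) (by linarith)
    refine ⟨N, fun i hi => ?_⟩
    have h1 := hN i hi
    rw [Real.dist_eq, sub_zero, abs_of_nonneg dist_nonneg] at h1 ⊢
    calc dist x0 (v i) ≤ dist x0 (u k i) + dist (u k i) (v i) := dist_triangle _ _ _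
      _ < ε/2 + 2 * (1/2 : ℝ) ^ k := by linarith [hpoint k i]
      _ ≤ ε := by linarith
  -- the limit multiset
  set L : X → ℕ∞ := fun x => if x = x0 then ⊤ else {i : ℕ | v i = x}.encard with hL
  have hvL : IsEnum x0 L v := by
    intro x hx
    rw [hL]
    simp only [if_neg hx]
  have hfib : ∀ x, x ≠ x0 → {i : ℕ | v i = x}.Finite := by
    intro x hx
    have hd : 0 < dist x0 x := dist_pos.mpr (Ne.symm hx)
    rw [Metric.tendsto_atTop] at hvnull
    obtain ⟨N, hN⟩ := hvnull (dist x0 x) hd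
    apply Set.Finite.subset (Set.finite_Iio N)
    intro i hi
    simp only [Set.mem_setOf_eq] at hi
    by_contra hiN
    have := hN i (by simpa [Set.mem_Iio] using hiN)
    rw [Real.dist_eq, sub_zero, abs_of_nonneg dist_nonneg, hi] at this
    exact lt_irrefl _ this
  have hvml : MemLPhi Φ fun i => dist x0 (v i) := by
    refine (memLPhi_dominated Φ (fun i => dist_nonneg) hvnull (fun i => dist_nonneg)
      (fun i => dist_nonneg) (fun i => dist_triangle x0 (u 0 i) (v i))
      (fun n => trunc_le_ext Φ (fun i => dist_nonneg) (hP 0).2.2 n)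
      (htail 0)).1
  have hLS : MemSPhi Φ x0 L := by
    refine ⟨⟨by rw [hL]; simp, ?_, ?_⟩, v, hvL, hvml⟩
    · intro x hx
      rw [hL]
      simp only [if_neg hx]
      exact ((hfib x hx).encard_lt_top).ne
    · apply Set.Countable.mono ?_ ((Set.countable_range v).union (Set.countable_singleton x0))
      intro x hx
      simp only [Set.mem_setOf_eq, hL] at hx
      by_cases hxx : x = x0
      · exact Or.inr (by simp [hxx])
      · rw [if_neg hxx] at hx
        have : {i : ℕ | v i = x}.Nonempty := by
          rw [Set.nonempty_iff_ne_empty]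
          intro hemp
          rw [hemp] at hx
          simp at hx
        obtain ⟨i, hi⟩ := this
        exact Or.inl ⟨i, hi⟩
  refine ⟨L, hLS, ?_⟩
  -- convergence
  rw [Metric.tendsto_atTop]
  intro ε hε
  obtain ⟨k, hk⟩ := exists_pow_lt_of_lt_one (show (0:ℝ) < ε/4 by linarith)
    (by norm_num : (1/2 : ℝ) < 1)
  refine ⟨M k, fun n hn => ?_⟩
  rw [Real.dist_eq, sub_zero, abs_of_nonneg (dPhi_nonneg Φ x0 _ _)]
  -- near-optimal pairing between S n and S (M k)
  have hlt := hM k n hn (M k) le_rfl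
  obtain ⟨s, t, hsA, htB, hml, hext⟩ := exists_pairing_of_dPhi_lt Φ (hS n) (hS (M k)) hlt
  -- swap the pairing so that the first component enumerates S (M k)
  have hswap : (fun i => dist (t i) (s i)) = fun i => dist (s i) (t i) :=
    funext fun i => dist_comm _ _
  have hml' : MemLPhi Φ fun i => dist (t i) (s i) := by rw [hswap]; exact hml
  obtain ⟨w, hwB, hwI, hwml, hwext⟩ :=
    transport_pairing Φ htB hsA hml' ((hP k).1) ((hP k).2.1)
  rw [hswap] at hwext
  -- pairing (w, v) between S n and L
  have hle : ∀ i, dist (w i) (v i) ≤ dist (u k i) (w i) + dist (u k i) (v i) :=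
    fun i => dist_triangle_left _ _ _
  have hnullγ : Tendsto (fun i => dist (u k i) (v i)) atTop (nhds 0) := by
    apply squeeze_zero (fun i => dist_nonneg) (fun i => dist_triangle_left _ _ x0)
    exact null_add (hP k).2.2.1 hvnull
  have hnullw : Tendsto (fun i => dist (w i) (v i)) atTop (nhds 0) := by
    apply squeeze_zero (fun i => dist_nonneg) hle
    exact null_add hwml.1 hnullγ
  obtain ⟨hmlwv, hextwv⟩ := memLPhi_dominated Φ (fun i => dist_nonneg) hnullw
    (fun i => dist_nonneg) (fun i => dist_nonneg) hle
    (fun m => trunc_le_ext Φ (fun i => dist_nonneg) hwml m)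
    (htail k)
  have hpair : Φ.ext (fun i => dist (w i) (v i)) ∈ pairSet Φ x0 (S n) L :=
    ⟨w, v, hwB, hvL, hmlwv, rfl⟩
  have hd := dPhi_le Φ x0 (S n) L hpair
  have : Φ.ext (fun i => dist (u k i) (w i)) < (1/2:ℝ)^k := lt_of_le_of_lt hwext hext
  calc dPhi Φ x0 (S n) L ≤ Φ.ext (fun i => dist (w i) (v i)) := hd
    _ ≤ Φ.ext (fun i => dist (u k i) (w i)) + 2 * (1/2:ℝ)^k := hextwv
    _ < (1/2:ℝ)^k + 2 * (1/2:ℝ)^k := by linarith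
    _ < ε := by linarith
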